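/- For every i∈I and every homogeneous x∈'𝔣, one has ᵢ𝒮(ι⁻(x)) = ξ(|x|, i)·ι⁻(r_i(x)) in '𝔣⁻, and 𝒮_i(ι⁺(x)) = ι⁺(ᵢr(x)) in '𝔣⁺. -/

import Mathlib

open scoped TensorProduct

noncomputable section

/-- A Cartan datum on `I`. -/
structure CartanDatum (I : Type) where
  c : I → I → ℤ
  symm : ∀ i j, c i j = c j i
  pos : ∀ i, 0 < c i i
  even : ∀ i, Even (c i i)
  dvd : ∀ i j, i ≠ j → c i i ∣ 2 * c i j
  nonpos : ∀ i j, i ≠ j → 2 * c i j ≤ 0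

namespace CartanDatum

variable {I : Type} (cd : CartanDatum I)

/-- `d i = (i·i)/2`. -/
def d (i : I) : ℤ := cd.c i i / 2

/-- `a i j = 2(i·j)/(i·i)`. -/
def a (i j : I) : ℤ := 2 * cd.c i j / cd.c i i

/-- Extension of the pairing to `ℕ[I] × ℕ[I]`. -/
def dotN (ν μ : I →₀ ℕ) : ℤ :=
  ν.sum fun i m => μ.sum fun j n => (m : ℤ) * (n : ℤ) * cd.c i j

end CartanDatum

/-- A multiplicative bilinear form `ℕ[I] × ℕ[I] → 𝔽`. -/
structure MultForm (I 𝔽 : Type) [Field 𝔽] where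
  f : (I →₀ ℕ) → (I →₀ ℕ) → 𝔽
  add_left : ∀ ν ν' μ, f (ν + ν') μ = f ν μ * f ν' μ
  add_right : ∀ μ ν ν', f μ (ν + ν') = f μ ν * f μ ν'
  ne_zero : ∀ ν μ, f ν μ ≠ 0

/-- The trivial multiplicative bilinear form, constantly `1`. -/
def trivMF (I 𝔽 : Type) [Field 𝔽] : MultForm I 𝔽 :=
  ⟨fun _ _ => 1, fun _ _ _ => by ring, fun _ _ _ => by ring, fun _ _ => one_ne_zero⟩

variable {I : Type}

/-- The generator `i` of `ℕ[I]`. -/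
def δN (i : I) : I →₀ ℕ := Finsupp.single i 1

/-- The model for the free algebra `'𝔣` on the `θ i`. -/
abbrev FA (𝔽 I : Type) [Field 𝔽] := MonoidAlgebra 𝔽 (FreeMonoid I)

/-- The generator `θ i` of `'𝔣`. -/
def θ (𝔽 : Type) [Field 𝔽] {I : Type} (i : I) : FA 𝔽 I :=
  MonoidAlgebra.of 𝔽 (FreeMonoid I) (FreeMonoid.of i)

/-- The `ℕ[I]`-degree of a word. -/
def wt [DecidableEq I] (w : FreeMonoid I) : I →₀ ℕ :=
  Multiset.toFinsupp (↑(FreeMonoid.toList w))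

/-- Homogeneity of degree `ν` in `'𝔣`. -/
def IsHomog {𝔽 : Type} [Field 𝔽] [DecidableEq I] (ν : I →₀ ℕ) (x : FA 𝔽 I) : Prop :=
  ∀ w ∈ Finsupp.support (x.coeff : FreeMonoid I →₀ 𝔽), wt w = ν

/-- The model for `'𝔣 ⊗ '𝔣` (basis: pairs of words). -/
abbrev TA (𝔽 I : Type) [Field 𝔽] := MonoidAlgebra 𝔽 (FreeMonoid I × FreeMonoid I)

/-- The tensor `x ⊗ y` in the model of `'𝔣 ⊗ '𝔣`. -/
def tmul {𝔽 : Type} [Field 𝔽] (x y : FA 𝔽 I) : TA 𝔽 I :=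
  Finsupp.sum (x.coeff : FreeMonoid I →₀ 𝔽) fun w a =>
    Finsupp.sum (y.coeff : FreeMonoid I →₀ 𝔽) fun u b =>
      MonoidAlgebra.ofCoeff (Finsupp.single (w, u) (a * b) : (FreeMonoid I × FreeMonoid I) →₀ 𝔽)

/-- The twisted multiplication on `'𝔣 ⊗ '𝔣`:
`(x₁⊗x₂)(y₁⊗y₂) = v^{-|y₁|·|x₂|} β(|x₂|,|y₁|) x₁y₁ ⊗ x₂y₂`. -/
def tMul [DecidableEq I] {𝔽 : Type} [Field 𝔽] (cd : CartanDatum I) (v : 𝔽)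
    (β : MultForm I 𝔽) (z z' : TA 𝔽 I) : TA 𝔽 I :=
  Finsupp.sum (z.coeff : (FreeMonoid I × FreeMonoid I) →₀ 𝔽) fun p a =>
    Finsupp.sum (z'.coeff : (FreeMonoid I × FreeMonoid I) →₀ 𝔽) fun q b =>
      MonoidAlgebra.ofCoeff (Finsupp.single (p.1 * q.1, p.2 * q.2)
        (a * b * v ^ (-(cd.dotN (wt q.1) (wt p.2))) * β.f (wt p.2) (wt q.1))
        : (FreeMonoid I × FreeMonoid I) →₀ 𝔽)

/-- The bilinear form on `'𝔣 ⊗ '𝔣` induced by a form `B` on `'𝔣`: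
`(x₁⊗x₂, y₁⊗y₂) = α(|x₁|,|x₂|) (x₁,y₁) (x₂,y₂)` for homogeneous `x₁, x₂`. -/
def pairT [DecidableEq I] {𝔽 : Type} [Field 𝔽] (α : MultForm I 𝔽)
    (B : FA 𝔽 I →ₗ[𝔽] FA 𝔽 I →ₗ[𝔽] 𝔽) (z z' : TA 𝔽 I) : 𝔽 :=
  Finsupp.sum (z.coeff : (FreeMonoid I × FreeMonoid I) →₀ 𝔽) fun p a =>
    Finsupp.sum (z'.coeff : (FreeMonoid I × FreeMonoid I) →₀ 𝔽) fun q b =>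
      a * b * α.f (wt p.1) (wt p.2)
        * B (MonoidAlgebra.single p.1 1) (MonoidAlgebra.single q.1 1)
        * B (MonoidAlgebra.single p.2 1) (MonoidAlgebra.single q.2 1)

/-- The quantum integer `[n]_c`. -/
def qnum {𝔽 : Type} [Field 𝔽] (c : 𝔽) (n : ℕ) : 𝔽 :=
  (c ^ (n : ℤ) - c ^ (-(n : ℤ))) / (c - c⁻¹)

/-- The quantum factorial `[n]_c!`. -/
def qfact {𝔽 : Type} [Field 𝔽] (c : 𝔽) (n : ℕ) : 𝔽 :=
  ∏ k ∈ Finset.range n, qnum c (k + 1)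

/-- The divided power `θ_i^{(n)} = θ_i^n / [n]_{v_i}!`. -/
def θdiv [DecidableEq I] {𝔽 : Type} [Field 𝔽] (cd : CartanDatum I) (v : 𝔽)
    (i : I) (n : ℕ) : FA 𝔽 I :=
  (qfact (v ^ cd.d i) n)⁻¹ • (θ 𝔽 i) ^ n

/-- The twisted quantum Serre element
`D_{ij} = Σ_{k+k'=1-a_{ij}} (-1)^k β(i,j)^{-k} θ_i^{(k)} θ_j θ_i^{(k')}`. -/
def Dij [DecidableEq I] {𝔽 : Type} [Field 𝔽] (cd : CartanDatum I) (v : 𝔽)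
    (g : I → I → 𝔽) (i j : I) : FA 𝔽 I :=
  ∑ k ∈ Finset.range ((1 - cd.a i j).toNat + 1),
    ((-1 : 𝔽) ^ k * ((g i j)⁻¹) ^ k) •
      (θdiv cd v i k * θ 𝔽 j * θdiv cd v i ((1 - cd.a i j).toNat - k))

end
noncomputable section

variable {I : Type}

/-- The generator `i` of `ℤ[I]`. -/
def δZ (i : I) : I →₀ ℤ := Finsupp.single i 1

/-- The inclusion `ℕ[I] → ℤ[I]`. -/
def nz (ν : I →₀ ℕ) : I →₀ ℤ := Finsupp.mapRange (fun n : ℕ => (n : ℤ)) rfl ν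

/-- The multiplicative extension to `ℤ[I] × ℤ[I]` of generator values `g : I → I → 𝔽`. -/
def extZ {𝔽 : Type} [Field 𝔽] (g : I → I → 𝔽) (ν μ : I →₀ ℤ) : 𝔽 :=
  ν.prod fun i m => μ.prod fun j n => g i j ^ (m * n)

/-- The form `⟨i,j⟩ = v^{-i·j} β(i,j) ξ(j,i)`, extended multiplicatively to `ℤ[I]`. -/
def ang {𝔽 : Type} [Field 𝔽] (cd : CartanDatum I) (v : 𝔽) (βg ξg : I → I → 𝔽) :
    (I →₀ ℤ) → (I →₀ ℤ) → 𝔽 :=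
  extZ fun i j => v ^ (-(cd.c i j)) * βg i j * ξg j i

/-- The monomial in `F : I → A` associated with a word `w`. -/
def wordProd {A : Type} [Monoid A] (F : I → A) (w : FreeMonoid I) : A :=
  ((FreeMonoid.toList w).map F).prod

/-- `x` is homogeneous of degree `μ` in the subalgebra generated by the image of `F`. -/
def HomogIn (𝔽 : Type) [Field 𝔽] [DecidableEq I] {A : Type} [Ring A] [Algebra 𝔽 A]
    (F : I → A) (μ : I →₀ ℕ) (x : A) : Prop :=
  x ∈ Submodule.span 𝔽 {z | ∃ w, wt w = μ ∧ z = wordProd F w}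

end
section helpers
variable {I : Type} [DecidableEq I] {𝔽 : Type} [Field 𝔽]

lemma wt_one : wt (1 : FreeMonoid I) = 0 := rfl

lemma wt_mul (w u : FreeMonoid I) : wt (w * u) = wt w + wt u := by
  unfold wt; rw [FreeMonoid.toList_mul, ← Multiset.coe_add, map_add]

lemma wt_of (a : I) : wt (FreeMonoid.of a) = δN a := by
  simp [wt, δN, FreeMonoid.toList_of]

lemma nz_add (a b : I →₀ ℕ) : nz (a + b) = nz a + nz b :=
  Finsupp.mapRange_add (by simp) a b

lemma nz_delta (a : I) : nz (δN a) = δZ a := by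
  simp [nz, δN, δZ]

lemma extZ_zero_left (g : I → I → 𝔽) (μ : I →₀ ℤ) : extZ g 0 μ = 1 := by
  simp [extZ]

lemma extZ_zero_right (g : I → I → 𝔽) (ν : I →₀ ℤ) : extZ g ν 0 = 1 := by
  simp [extZ, Finsupp.prod]

lemma extZ_single_left (g : I → I → 𝔽) (i : I) (μ : I →₀ ℤ) :
    extZ g (δZ i) μ = μ.prod fun j n => g i j ^ n := by
  unfold extZ δZ
  rw [Finsupp.prod_single_index (by simp [Finsupp.prod])]
  simp

lemma extZ_single_right (g : I → I → 𝔽) (ν : I →₀ ℤ) (j : I) :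
    extZ g ν (δZ j) = ν.prod fun i m => g i j ^ m := by
  unfold extZ δZ
  refine Finsupp.prod_congr fun i _ => ?_
  rw [Finsupp.prod_single_index (by simp)]
  simp

lemma extZ_single_single (g : I → I → 𝔽) (i j : I) :
    extZ g (δZ i) (δZ j) = g i j := by
  rw [extZ_single_left, δZ, Finsupp.prod_single_index (by simp)]
  simp

lemma extZ_mul (f g : I → I → 𝔽) (ν μ : I →₀ ℤ) :
    extZ (fun i j => f i j * g i j) ν μ = extZ f ν μ * extZ g ν μ := by
  unfold extZ
  rw [Finsupp.prod, Finsupp.prod, Finsupp.prod, ← Finset.prod_mul_distrib]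
  refine Finset.prod_congr rfl fun i _ => ?_
  rw [Finsupp.prod, Finsupp.prod, Finsupp.prod, ← Finset.prod_mul_distrib]
  exact Finset.prod_congr rfl fun j _ => mul_zpow _ _ _

lemma extZ_add_left {g : I → I → 𝔽} (hg : ∀ i j, g i j ≠ 0) (a b μ : I →₀ ℤ) :
    extZ g (a + b) μ = extZ g a μ * extZ g b μ := by
  unfold extZ
  refine Finsupp.prod_add_index (fun i _ => by simp [Finsupp.prod]) (fun i _ m m' => ?_)
  rw [Finsupp.prod, Finsupp.prod, Finsupp.prod, ← Finset.prod_mul_distrib]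
  refine Finset.prod_congr rfl fun j _ => ?_
  rw [add_mul, zpow_add₀ (hg i j)]

lemma extZ_swap_single (g : I → I → 𝔽) (i : I) (τ : I →₀ ℤ) :
    extZ (fun p q => g q p) (δZ i) τ = extZ g τ (δZ i) := by
  rw [extZ_single_left, extZ_single_right]

lemma zpow_finset_sum {v : 𝔽} (hv0 : v ≠ 0) {J : Type} (s : Finset J) (f : J → ℤ) :
    v ^ (∑ j ∈ s, f j) = ∏ j ∈ s, v ^ f j := by
  classical
  induction s using Finset.induction with
  | empty => simp
  | insert _ _ h ih => rw [Finset.sum_insert h, Finset.prod_insert h, zpow_add₀ hv0, ih]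

lemma extZ_nz (g : I → I → 𝔽) (ν : I →₀ ℤ) (μ : I →₀ ℕ) :
    extZ g ν (nz μ) = ν.prod fun i m => μ.prod fun j n => g i j ^ (m * (n : ℤ)) := by
  unfold extZ nz
  refine Finsupp.prod_congr fun i _ => ?_
  exact Finsupp.prod_mapRange_index (fun j => by simp)

lemma dotN_delta (cd : CartanDatum I) (i : I) (μ : I →₀ ℕ) :
    cd.dotN (δN i) μ = μ.sum fun j n => (n : ℤ) * cd.c i j := by
  unfold CartanDatum.dotN δN
  rw [Finsupp.sum_single_index (by simp)]
  simp

lemma extZ_v {v : 𝔽} (hv0 : v ≠ 0) (cd : CartanDatum I) (i : I) (μ : I →₀ ℕ) :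
    extZ (fun p q => v ^ (-(cd.c p q))) (δZ i) (nz μ) = v ^ (-(cd.dotN (δN i) μ)) := by
  rw [extZ_single_left, dotN_delta, nz]
  rw [Finsupp.prod_mapRange_index (fun j => by simp)]
  rw [show -(μ.sum fun j n => (n : ℤ) * cd.c i j)
      = μ.sum fun j n => -(cd.c i j) * (n : ℤ) from by
    rw [Finsupp.sum, Finsupp.sum, ← Finset.sum_neg_distrib]
    exact Finset.sum_congr rfl fun j _ => by ring]
  rw [Finsupp.sum, Finsupp.prod, zpow_finset_sum hv0]
  exact Finset.prod_congr rfl fun j _ => (zpow_mul v _ _).symm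

lemma ang_delta_left (cd : CartanDatum I) (v : 𝔽) (βg ξg : I → I → 𝔽) (hv0 : v ≠ 0)
    (i : I) (μ : I →₀ ℕ) :
    ang cd v βg ξg (δZ i) (nz μ)
      = v ^ (-(cd.dotN (δN i) μ)) * extZ βg (δZ i) (nz μ) * extZ ξg (nz μ) (δZ i) := by
  unfold ang
  rw [show (fun p q => v ^ (-(cd.c p q)) * βg p q * ξg q p)
      = fun p q => (fun p q => v ^ (-(cd.c p q)) * βg p q) p q * (fun p q => ξg q p) p q from rfl]
  rw [extZ_mul, extZ_mul, extZ_v hv0]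
  congr 1
  exact extZ_swap_single ξg i (nz μ)

end helpers
theorem iota_intertwines_S_and_r
    {I : Type} [Fintype I] [DecidableEq I] (cd : CartanDatum I)
    {𝔽 : Type} [Field 𝔽] [CharZero 𝔽] (v : 𝔽) (hv : Transcendental ℚ v)
    (βg ξg : I → I → 𝔽)
    (hββ : ∀ i j, βg i j * βg j i = 1) (hβii : ∀ i, βg i i = 1)
    (hξsymm : ∀ i j, ξg i j = ξg j i) (hξne : ∀ i j, ξg i j ≠ 0)
    {Ap : Type} [Ring Ap] [Algebra 𝔽 Ap]
    (E : I → Ap) (K Jp : (I →₀ ℤ) → Ap)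
    (hK0 : K 0 = 1) (hKadd : ∀ a b, K (a + b) = K a * K b)
    (hJ0 : Jp 0 = 1) (hJadd : ∀ a b, Jp (a + b) = Jp a * Jp b)
    (hKJ : ∀ a b, K a * Jp b = Jp b * K a)
    (hKE : ∀ i j : I, K (δZ i) * E j = ang cd v βg ξg (δZ i) (δZ j) • (E j * K (δZ i)))
    (hJE : ∀ i j : I, Jp (δZ i) * E j = ξg j i • (E j * Jp (δZ i)))
    (bp : Module.Basis ((I →₀ ℤ) × FreeMonoid I × (I →₀ ℤ)) 𝔽 Ap)
    (hbp : ∀ p, bp p = K p.1 * wordProd E p.2.1 * Jp p.2.2)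
    {Am : Type} [Ring Am] [Algebra 𝔽 Am]
    (F : I → Am) (K' J' : (I →₀ ℤ) → Am)
    (hK'0 : K' 0 = 1) (hK'add : ∀ a b, K' (a + b) = K' a * K' b)
    (hJ'0 : J' 0 = 1) (hJ'add : ∀ a b, J' (a + b) = J' a * J' b)
    (hK'J' : ∀ a b, K' a * J' b = J' b * K' a)
    (hK'F : ∀ i j : I, K' (δZ i) * F j
      = (ang cd v βg ξg (δZ j) (δZ i) * (ξg i j)⁻¹) • (F j * K' (δZ i)))
    (hJ'F : ∀ i j : I, J' (δZ i) * F j = F j * J' (δZ i))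
    (bm : Module.Basis ((I →₀ ℤ) × FreeMonoid I × (I →₀ ℤ)) 𝔽 Am)
    (hbm : ∀ p, bm p = K' p.1 * wordProd F p.2.1 * J' p.2.2)
    (cK cJ : (I →₀ ℤ) → (Am →ₗ[𝔽] Am))
    (hcK : ∀ (ν τ₁ τ₂ : I →₀ ℤ) (w : FreeMonoid I),
      cK ν (K' τ₁ * wordProd F w * J' τ₂)
        = (ang cd v βg ξg ν τ₁ * ang cd v βg ξg ν (nz (wt w))) • (K' τ₁ * wordProd F w * J' τ₂))
    (hcJ : ∀ (ν τ₁ τ₂ : I →₀ ℤ) (w : FreeMonoid I),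
      cJ ν (K' τ₁ * wordProd F w * J' τ₂)
        = (extZ ξg τ₁ ν * extZ ξg (nz (wt w)) ν) • (K' τ₁ * wordProd F w * J' τ₂))
    (iS : I → (Am →ₗ[𝔽] Am))
    (hiS0 : ∀ (j : I) (τ₁ τ₂ : I →₀ ℤ), iS j (K' τ₁ * J' τ₂) = 0)
    (hiSF : ∀ j i : I, iS j (F i) = if i = j then ξg i j • (1 : Am) else 0)
    (hiSmul : ∀ (j : I) (x y : Am), iS j (x * y) = iS j x * cJ (δZ j) y + cK (δZ j) x * iS j y)
    (cK' cJ' : (I →₀ ℤ) → (Ap →ₗ[𝔽] Ap))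
    (hcK' : ∀ (ν τ₁ τ₂ : I →₀ ℤ) (w : FreeMonoid I),
      cK' ν (K τ₁ * wordProd E w * Jp τ₂)
        = (ang cd v βg ξg τ₁ ν * ang cd v βg ξg (nz (wt w)) ν
            * (extZ ξg ν (nz (wt w)))⁻¹ * extZ ξg ν τ₂) • (K τ₁ * wordProd E w * Jp τ₂))
    (hcJ' : ∀ (ν τ₁ τ₂ : I →₀ ℤ) (w : FreeMonoid I),
      cJ' ν (K τ₁ * wordProd E w * Jp τ₂) = K τ₁ * wordProd E w * Jp τ₂)
    (Sj : I → (Ap →ₗ[𝔽] Ap))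
    (hSj0 : ∀ (j : I) (τ₁ τ₂ : I →₀ ℤ), Sj j (K τ₁ * Jp τ₂) = 0)
    (hSjE : ∀ j i : I, Sj j (E i) = if i = j then 1 else 0)
    (hSjmul : ∀ (j : I) (x y : Ap), Sj j (x * y) = Sj j x * y + cK' (δZ j) x * Sj j y)
    (ιp : FA 𝔽 I →ₐ[𝔽] Ap) (hιp : ∀ i, ιp (θ 𝔽 i) = E i)
    (ιm : FA 𝔽 I →ₗ[𝔽] Am) (hιm1 : ιm 1 = 1)
    (hιmanti : ∀ x y : FA 𝔽 I, ιm (x * y) = ιm y * ιm x)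
    (hιmθ : ∀ i, ιm (θ 𝔽 i) = F i)
    (ri : I → (FA 𝔽 I →ₗ[𝔽] FA 𝔽 I))
    (hri1 : ∀ i, ri i 1 = 0)
    (hriθ : ∀ i j : I, ri i (θ 𝔽 j) = if i = j then 1 else 0)
    (hrim : ∀ (i : I) (ν μ : I →₀ ℕ) (x y : FA 𝔽 I), IsHomog ν x → IsHomog μ y →
      ri i (x * y)
        = (v ^ (-(cd.dotN (δN i) μ)) * extZ βg (δZ i) (nz μ)) • (ri i x * y) + x * ri i y)
    (ir : I → (FA 𝔽 I →ₗ[𝔽] FA 𝔽 I))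
    (hir1 : ∀ i, ir i 1 = 0)
    (hirθ : ∀ i j : I, ir i (θ 𝔽 j) = if i = j then 1 else 0)
    (hirm : ∀ (i : I) (ν μ : I →₀ ℕ) (x y : FA 𝔽 I), IsHomog ν x → IsHomog μ y →
      ir i (x * y)
        = ir i x * y + (v ^ (-(cd.dotN (δN i) ν)) * extZ βg (nz ν) (δZ i)) • (x * ir i y))
    :
    ∀ (i : I) (ν : I →₀ ℕ) (x : FA 𝔽 I), IsHomog ν x →
      iS i (ιm x) = extZ ξg (nz ν) (δZ i) • ιm (ri i x) ∧
      Sj i (ιp x) = ιp (ir i x) := by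
  intro i ν x hx
  have hv0 : v ≠ 0 := fun h => hv (h ▸ isAlgebraic_zero)
  have hβne : ∀ a b : I, βg a b ≠ 0 := fun a b h => by
    have h1 := hββ a b; rw [h, zero_mul] at h1; exact zero_ne_one h1
  have hwpFmul : ∀ w u : FreeMonoid I, wordProd F (w * u) = wordProd F w * wordProd F u := by
    intro w u; simp [wordProd, FreeMonoid.toList_mul]
  have hwpFof : ∀ a : I, wordProd F (FreeMonoid.of a) = F a := by
    intro a; simp [wordProd, FreeMonoid.toList_of]
  have hwpEmul : ∀ w u : FreeMonoid I, wordProd E (w * u) = wordProd E w * wordProd E u := by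
    intro w u; simp [wordProd, FreeMonoid.toList_mul]
  have hwpEof : ∀ a : I, wordProd E (FreeMonoid.of a) = E a := by
    intro a; simp [wordProd, FreeMonoid.toList_of]
  have hone : (MonoidAlgebra.single (1 : FreeMonoid I) (1 : 𝔽)) = 1 := rfl
  have hsplit : ∀ (a : I) (t : List I),
      MonoidAlgebra.single (FreeMonoid.ofList (a :: t)) (1 : 𝔽)
        = θ 𝔽 a * MonoidAlgebra.single (FreeMonoid.ofList t) 1 := by
    intro a t
    rw [θ, MonoidAlgebra.of_apply, MonoidAlgebra.single_mul_single, one_mul]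
    rfl
  have hθs : ∀ a : I, θ 𝔽 a = MonoidAlgebra.single (FreeMonoid.of a) (1 : 𝔽) := by
    intro a; rw [θ, MonoidAlgebra.of_apply]
  have hwt_cons : ∀ (a : I) (t : List I),
      wt (FreeMonoid.ofList (a :: t)) = δN a + wt (FreeMonoid.ofList t) := by
    intro a t
    rw [show FreeMonoid.ofList (a :: t) = FreeMonoid.of a * FreeMonoid.ofList t from rfl,
      wt_mul, wt_of]
  have hhom : ∀ w : FreeMonoid I, IsHomog (wt w) (MonoidAlgebra.single w (1 : 𝔽)) := by
    intro w u hu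
    have h2 := Finsupp.support_single_subset hu
    simp only [Finset.mem_singleton] at h2
    rw [h2]
  have hθh : ∀ a : I, IsHomog (δN a) (θ 𝔽 a) := by
    intro a; rw [hθs, ← wt_of a]; exact hhom _
  have hιm_word : ∀ l : List I,
      ιm (MonoidAlgebra.single (FreeMonoid.ofList l) (1 : 𝔽))
        = wordProd F (FreeMonoid.ofList l.reverse) := by
    intro l
    induction l with
    | nil =>
      rw [show FreeMonoid.ofList ([] : List I) = 1 from rfl, hone, hιm1]
      simp [wordProd]
    | cons a t ih =>
      rw [hsplit, hιmanti, hιmθ, ih]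
      rw [show (a :: t).reverse = t.reverse ++ [a] from by simp]
      rw [show FreeMonoid.ofList (t.reverse ++ [a])
          = FreeMonoid.ofList t.reverse * FreeMonoid.of a from rfl]
      rw [hwpFmul, hwpFof]
  have hιp_word : ∀ l : List I,
      ιp (MonoidAlgebra.single (FreeMonoid.ofList l) (1 : 𝔽))
        = wordProd E (FreeMonoid.ofList l) := by
    intro l
    induction l with
    | nil =>
      rw [show FreeMonoid.ofList ([] : List I) = 1 from rfl, hone, map_one]
      simp [wordProd]
    | cons a t ih =>
      rw [hsplit, map_mul, hιp, ih,
        show FreeMonoid.ofList (a :: t) = FreeMonoid.of a * FreeMonoid.ofList t from rfl,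
        hwpEmul, hwpEof]
  have hwt_rev : ∀ l : List I, wt (FreeMonoid.ofList l.reverse) = wt (FreeMonoid.ofList l) := by
    intro l; unfold wt
    rw [FreeMonoid.toList_ofList, FreeMonoid.toList_ofList, Multiset.coe_reverse]
  have hiS1 : ∀ j, iS j (1 : Am) = 0 := fun j => by
    have h2 := hiS0 j 0 0; rwa [hK'0, hJ'0, one_mul] at h2
  have hSj1 : ∀ j, Sj j (1 : Ap) = 0 := fun j => by
    have h2 := hSj0 j 0 0; rwa [hK0, hJ0, one_mul] at h2
  have hcKw : ∀ (τ : I →₀ ℤ) (w : FreeMonoid I),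
      cK τ (wordProd F w) = (ang cd v βg ξg τ (nz (wt w))) • wordProd F w := by
    intro τ w
    have h2 := hcK τ 0 0 w
    rwa [hK'0, hJ'0, one_mul, mul_one,
      show ang cd v βg ξg τ 0 = 1 from extZ_zero_right _ _, one_mul] at h2
  have hcJw : ∀ (τ : I →₀ ℤ) (w : FreeMonoid I),
      cJ τ (wordProd F w) = (extZ ξg (nz (wt w)) τ) • wordProd F w := by
    intro τ w
    have h2 := hcJ τ 0 0 w
    rwa [hK'0, hJ'0, one_mul, mul_one, extZ_zero_left, one_mul] at h2
  have hcK'w : ∀ (τ : I →₀ ℤ) (w : FreeMonoid I),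
      cK' τ (wordProd E w)
        = (ang cd v βg ξg (nz (wt w)) τ * (extZ ξg τ (nz (wt w)))⁻¹) • wordProd E w := by
    intro τ w
    have h2 := hcK' τ 0 0 w
    rwa [hK0, hJ0, one_mul, mul_one,
      show ang cd v βg ξg (0 : I →₀ ℤ) τ = 1 from extZ_zero_left _ _, one_mul,
      extZ_zero_right, mul_one] at h2
  have key : ∀ (l : List I) (j : I),
      iS j (ιm (MonoidAlgebra.single (FreeMonoid.ofList l) (1 : 𝔽)))
        = extZ ξg (nz (wt (FreeMonoid.ofList l))) (δZ j)
            • ιm (ri j (MonoidAlgebra.single (FreeMonoid.ofList l) 1)) ∧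
      Sj j (ιp (MonoidAlgebra.single (FreeMonoid.ofList l) (1 : 𝔽)))
        = ιp (ir j (MonoidAlgebra.single (FreeMonoid.ofList l) 1)) := by
    intro l
    induction l with
    | nil =>
      intro j
      rw [show FreeMonoid.ofList ([] : List I) = 1 from rfl, hone]
      constructor
      · rw [hιm1, hiS1, hri1, map_zero, smul_zero]
      · rw [map_one, hSj1, hir1, map_zero]
    | cons a t ih =>
      intro j
      obtain ⟨ih1, ih2⟩ := ih j
      constructor
      · -- negative case
        have e1 := hcJw (δZ j) (FreeMonoid.of a)
        rw [wt_of, nz_delta, extZ_single_single, hwpFof] at e1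
        have e2 := hcKw (δZ j) (FreeMonoid.ofList t.reverse)
        rw [hwt_rev t, ← hιm_word t] at e2
        have e3 := hiSF j a
        have e4 := hrim j (δN a) (wt (FreeMonoid.ofList t)) (θ 𝔽 a)
          (MonoidAlgebra.single (FreeMonoid.ofList t) (1 : 𝔽)) (hθh a) (hhom _)
        rw [hriθ] at e4
        have e5 : extZ ξg (nz (wt (FreeMonoid.ofList (a :: t)))) (δZ j)
            = ξg a j * extZ ξg (nz (wt (FreeMonoid.ofList t))) (δZ j) := by
          rw [hwt_cons, nz_add, nz_delta, extZ_add_left hξne, extZ_single_single]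
        have e6 := ang_delta_left cd v βg ξg hv0 j (wt (FreeMonoid.ofList t))
        rw [hsplit, hιmanti, hιmθ, hiSmul, e1, e2, e3, ih1, e4, e5, e6]
        by_cases haj : a = j
        · subst haj
          simp only [eq_self_iff_true, if_true, if_pos rfl, one_mul, map_add, map_smul, hιmanti, hιmθ]
          simp only [smul_mul_assoc, mul_smul_comm, smul_smul, mul_one, smul_add]
          module
        · simp only [if_neg haj, if_neg (show ¬ j = a from fun h => haj h.symm), zero_mul,
            mul_zero, smul_zero, map_zero, add_zero, zero_add, map_add, map_smul, hιmanti, hιmθ]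
          simp only [smul_mul_assoc, mul_smul_comm, smul_smul, mul_one, smul_add]
      · -- positive case
        have f2 := hcK'w (δZ j) (FreeMonoid.of a)
        rw [wt_of, nz_delta, hwpEof, extZ_single_single,
          show ang cd v βg ξg (δZ a) (δZ j) = v ^ (-(cd.c a j)) * βg a j * ξg j a from
            extZ_single_single _ a j,
          mul_inv_cancel_right₀ (hξne j a)] at f2
        have f4 := hirm j (δN a) (wt (FreeMonoid.ofList t)) (θ 𝔽 a)
          (MonoidAlgebra.single (FreeMonoid.ofList t) (1 : 𝔽)) (hθh a) (hhom _)
        rw [hirθ, nz_delta, extZ_single_single,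
          show cd.dotN (δN j) (δN a) = cd.c j a from by
            rw [dotN_delta]
            unfold δN
            rw [Finsupp.sum_single_index (by simp)]
            simp,
          cd.symm j a] at f4
        rw [hsplit, map_mul, hιp, hSjmul, hSjE, f2, ih2, f4]
        by_cases haj : a = j
        · subst haj
          simp only [eq_self_iff_true, if_true, if_pos rfl, one_mul, map_add, map_smul, map_mul, hιp, smul_mul_assoc]
        · simp only [if_neg haj, if_neg (show ¬ j = a from fun h => haj h.symm), zero_mul,
            zero_add, map_zero, map_add, map_smul, map_mul, hιp, smul_mul_assoc]
  constructor
  · have hxsum : x = Finsupp.sum x.coeff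
        (fun w a => a • MonoidAlgebra.single w (1 : 𝔽)) := by
      conv_lhs => rw [← MonoidAlgebra.sum_coeff_single x]
      refine Finsupp.sum_congr fun w _ => ?_
      rw [MonoidAlgebra.smul_single, smul_eq_mul, mul_one]
    have h1 : iS i (ιm x) = Finsupp.sum x.coeff
        (fun w a => a • iS i (ιm (MonoidAlgebra.single w (1 : 𝔽)))) := by
      conv_lhs => rw [hxsum]
      rw [map_finsuppSum, map_finsuppSum]
      exact Finsupp.sum_congr fun w _ => by rw [map_smul, map_smul]
    have h2 : ιm (ri i x) = Finsupp.sum x.coeff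
        (fun w a => a • ιm (ri i (MonoidAlgebra.single w (1 : 𝔽)))) := by
      conv_lhs => rw [hxsum]
      rw [map_finsuppSum, map_finsuppSum]
      exact Finsupp.sum_congr fun w _ => by rw [map_smul, map_smul]
    rw [h1, h2, Finsupp.smul_sum]
    refine Finsupp.sum_congr fun w hw => ?_
    have hk := (key (FreeMonoid.toList w) i).1
    rw [FreeMonoid.ofList_toList, hx w hw] at hk
    rw [hk, smul_comm]
  · have hxsum : x = Finsupp.sum x.coeff
        (fun w a => a • MonoidAlgebra.single w (1 : 𝔽)) := by
      conv_lhs => rw [← MonoidAlgebra.sum_coeff_single x]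
      refine Finsupp.sum_congr fun w _ => ?_
      rw [MonoidAlgebra.smul_single, smul_eq_mul, mul_one]
    have h1 : Sj i (ιp x) = Finsupp.sum x.coeff
        (fun w a => a • Sj i (ιp (MonoidAlgebra.single w (1 : 𝔽)))) := by
      conv_lhs => rw [hxsum]
      rw [map_finsuppSum, map_finsuppSum]
      exact Finsupp.sum_congr fun w _ => by rw [map_smul, map_smul]
    have h2 : ιp (ir i x) = Finsupp.sum x.coeff
        (fun w a => a • ιp (ir i (MonoidAlgebra.single w (1 : 𝔽)))) := by
      conv_lhs => rw [hxsum]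
      rw [map_finsuppSum, map_finsuppSum]
      exact Finsupp.sum_congr fun w _ => by rw [map_smul, map_smul]
    rw [h1, h2]
    refine Finsupp.sum_congr fun w hw => ?_
    have hk := (key (FreeMonoid.toList w) i).2
    rw [FreeMonoid.ofList_toList] at hk
    rw [hk]
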